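/- For each base station n, let O_n > 0 be the fraction of time-frequency resources allocated to each served user and T_n > 0 the target rate, and define the rate coverage R_c(Δ, Ψ) = P(∃ n ∈ ℕ, O_n · log₂(1 + SIR_n) > T_n) (with log₂(1 + SIR_n) = ∞ when the interference is zero and the direct signal positive). Consider two parameter choices (Δ_n, Ψ_n)_{n∈ℕ} and (Δ'_n, Ψ'_n)_{n∈ℕ} using the same locations x_n, powers P_n, resource fractions O_n and target rates T_n. If Δ_n ≥ Δ'_n and Ψ_n ≤ Ψ'_n for every n ∈ ℕ, then R_c(Δ, Ψ) ≥ R_c(Δ', Ψ'). -/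

import Mathlib

open MeasureTheory ProbabilityTheory ENNReal

/-- Interference at the typical user from all base stations except `n`, valued in `[0,∞]`. -/
noncomputable def interference {Ω : Type*} (P : ℕ → ℝ) (x : ℕ → EuclideanSpace ℝ (Fin 2))
    (α : ℝ) (g : ℕ → Ω → ℝ) (n : ℕ) (ω : Ω) : ℝ≥0∞ :=
  ∑' m : ℕ, if m = n then 0 else ENNReal.ofReal (P m * g m ω * ‖x m‖ ^ (-α))

/-- SIR of base station `n` at the typical user, valued in `[0,∞]`
(it equals `0` when the interference is infinite). -/
noncomputable def SIR {Ω : Type*} (P : ℕ → ℝ) (x : ℕ → EuclideanSpace ℝ (Fin 2))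
    (α : ℝ) (h g : ℕ → Ω → ℝ) (n : ℕ) (ω : Ω) : ℝ≥0∞ :=
  ENNReal.ofReal (P n * h n ω * ‖x n‖ ^ (-α)) / interference P x α g n ω

/-- Rate delivered by base station `n`: `O n · log₂(1 + SIR_n)`, valued in `[0,∞]`;
it is `∞` exactly when the SIR is `∞` (zero interference and positive direct signal). -/
noncomputable def rate {Ω : Type*} (P : ℕ → ℝ) (x : ℕ → EuclideanSpace ℝ (Fin 2))
    (α : ℝ) (O : ℕ → ℝ) (h g : ℕ → Ω → ℝ) (n : ℕ) (ω : Ω) : ℝ≥0∞ :=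
  if SIR P x α h g n ω = ∞ then ∞
  else ENNReal.ofReal (O n * Real.logb 2 (1 + (SIR P x α h g n ω).toReal))


section Aux
open Real Set Finset in
noncomputable def gpdf (k : ℕ) (x : ℝ) : ℝ :=
  x ^ (k - 1) * Real.exp (-x) / (Nat.factorial (k - 1))

lemma gpdf_cont (k : ℕ) : Continuous (gpdf k) := by
  unfold gpdf; fun_prop

lemma gpdf_nonneg (k : ℕ) (x : ℝ) (hx : 0 ≤ x) : 0 ≤ gpdf k x := by
  unfold gpdf; positivity

lemma gammaPDF_eq_gpdf {k : ℕ} (hk : 0 < k) {x : ℝ} (hx : 0 ≤ x) :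
    gammaPDF (k : ℝ) 1 x = ENNReal.ofReal (gpdf k x) := by
  rw [gammaPDF_of_nonneg hx]
  congr 1
  have h1 : (1 : ℝ) ^ (k : ℝ) = 1 := Real.one_rpow _
  have hg : Real.Gamma (k : ℝ) = (Nat.factorial (k - 1) : ℝ) := by
    obtain ⟨m, rfl⟩ := Nat.exists_eq_add_of_lt hk
    rw [zero_add]
    push_cast
    rw [Real.Gamma_nat_eq_factorial]
  have hx1 : x ^ ((k : ℝ) - 1) = x ^ (k - 1) := by
    obtain ⟨m, rfl⟩ := Nat.exists_eq_add_of_lt hk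
    rw [zero_add]
    push_cast
    rw [add_sub_cancel_right, ← Real.rpow_natCast]
  rw [h1, hg, hx1, gpdf]
  ring_nf

lemma hasDerivAt_F (k : ℕ) (hk : 0 < k) (x : ℝ) :
    HasDerivAt (fun y : ℝ => y ^ k * Real.exp (-y) / (Nat.factorial k))
      (gpdf k x - gpdf (k + 1) x) x := by
  have h1 : HasDerivAt (fun y : ℝ => y ^ k) (k * x ^ (k - 1)) x := by
    simpa using hasDerivAt_pow k x
  have h2 : HasDerivAt (fun y : ℝ => Real.exp (-y)) (-Real.exp (-x)) x := by
    simpa [Function.comp_def] using (Real.hasDerivAt_exp (-x)).comp x (hasDerivAt_neg x)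
  have h3 := (h1.mul h2).div_const (Nat.factorial k : ℝ)
  convert h3 using 1
  · rfl
  · rfl
  · rfl
  have hfact : (Nat.factorial k : ℝ) = k * (Nat.factorial (k - 1)) := by
    obtain ⟨m, rfl⟩ := Nat.exists_eq_add_of_lt hk
    rw [zero_add]
    push_cast [Nat.factorial_succ]
    simp
  unfold gpdf
  simp only [Nat.add_sub_cancel]
  have hfk : (Nat.factorial k : ℝ) ≠ 0 := Nat.cast_ne_zero.2 (Nat.factorial_ne_zero k)
  have hfk1 : (Nat.factorial (k-1) : ℝ) ≠ 0 := Nat.cast_ne_zero.2 (Nat.factorial_ne_zero _)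
  field_simp [hfact]
  rw [hfact]
  ring

lemma gpdf_int_le (k : ℕ) (hk : 0 < k) (t : ℝ) (ht : 0 < t) :
    ∫ x in (0:ℝ)..t, gpdf (k+1) x ≤ ∫ x in (0:ℝ)..t, gpdf k x := by
  have hint : ∀ j : ℕ, IntervalIntegrable (gpdf j) volume 0 t :=
    fun j => (gpdf_cont j).intervalIntegrable 0 t
  have hftc := intervalIntegral.integral_eq_sub_of_hasDerivAt
    (f := fun y : ℝ => y ^ k * Real.exp (-y) / (Nat.factorial k))
    (f' := fun x => gpdf k x - gpdf (k+1) x)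
    (fun x _ => hasDerivAt_F k hk x) (((hint k).sub (hint (k+1))))
  rw [intervalIntegral.integral_sub (hint k) (hint (k+1))] at hftc
  have h0 : (0:ℝ) ^ k * Real.exp (-0) / (Nat.factorial k) = 0 := by
    rw [zero_pow hk.ne']; simp
  rw [h0, sub_zero] at hftc
  have : 0 ≤ t ^ k * Real.exp (-t) / (Nat.factorial k) := by positivity
  linarith

lemma gamma_Iio_succ_le (k : ℕ) (hk : 0 < k) (t : ℝ) :
    gammaMeasure (k + 1 : ℕ) 1 (Set.Iio t) ≤ gammaMeasure k 1 (Set.Iio t) := by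
  rcases le_or_gt t 0 with ht | ht
  · simp only [gammaMeasure, withDensity_apply _ measurableSet_Iio]
    rw [ProbabilityTheory.lintegral_gammaPDF_of_nonpos ht,
      ProbabilityTheory.lintegral_gammaPDF_of_nonpos ht]
  · have hsplit : ∀ a : ℕ, 0 < a → gammaMeasure a 1 (Set.Iio t)
        = ENNReal.ofReal (∫ x in (0:ℝ)..t, gpdf a x) := by
      intro a ha
      rw [gammaMeasure, withDensity_apply _ measurableSet_Iio]
      have hu : Set.Iio t = Set.Iio 0 ∪ Set.Ico 0 t := by
        rw [Set.Iio_union_Ico_eq_Iio ht.le]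
      rw [hu, lintegral_union measurableSet_Ico (by
        simp [Set.disjoint_iff_forall_ne]; intro a ha b hb _; nlinarith)]
      have h0 : ∫⁻ x in Set.Iio 0, gammaPDF a 1 x = 0 :=
        ProbabilityTheory.lintegral_gammaPDF_of_nonpos le_rfl
      rw [h0, zero_add]
      have hcongr : ∫⁻ x in Set.Ico 0 t, gammaPDF a 1 x
          = ∫⁻ x in Set.Ico 0 t, ENNReal.ofReal (gpdf a x) := by
        apply setLIntegral_congr_fun_ae measurableSet_Ico
        exact ae_of_all _ fun x hx => gammaPDF_eq_gpdf ha hx.1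
      rw [hcongr, ← ofReal_integral_eq_lintegral_ofReal
        (((gpdf_cont a).integrableOn_Icc (a := 0) (b := t)).mono_set Set.Ico_subset_Icc_self)
        (ae_restrict_of_ae_restrict_of_subset (Set.Ico_subset_Ici_self)
          ((ae_restrict_iff' measurableSet_Ici).2 (ae_of_all _ fun x hx => gpdf_nonneg a x hx)))]
      congr 1
      rw [intervalIntegral.integral_of_le ht.le, integral_Ico_eq_integral_Ioo,
        integral_Ioc_eq_integral_Ioo]
    rw [hsplit _ hk, hsplit _ (Nat.succ_pos k)]
    exact ENNReal.ofReal_le_ofReal (gpdf_int_le k hk t ht)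

lemma gamma_singleton (a r t : ℝ) : gammaMeasure a r {t} = 0 := by
  rw [gammaMeasure, withDensity_apply _ (measurableSet_singleton t)]
  rw [Measure.restrict_singleton]
  simp

lemma gamma_Iio_mono {k K : ℕ} (hk : 0 < k) (hkK : k ≤ K) (t : ℝ) :
    gammaMeasure K 1 (Set.Iio t) ≤ gammaMeasure k 1 (Set.Iio t) := by
  induction K with
  | zero => omega
  | succ n ih =>
    rcases Nat.lt_or_ge k (n+1) with hlt | hge
    · have hn : k ≤ n := by omega
      have hnpos : 0 < n := by omega
      exact le_trans (gamma_Iio_succ_le n hnpos t) (ih hn)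
    · have : k = n + 1 := by omega
      subst this; exact le_rfl

lemma gamma_Ici_mono {k K : ℕ} (hk : 0 < k) (hkK : k ≤ K) (t : ℝ) :
    gammaMeasure k 1 (Set.Ici t) ≤ gammaMeasure K 1 (Set.Ici t) := by
  have hK : 0 < K := lt_of_lt_of_le hk hkK
  have h1 : IsProbabilityMeasure (gammaMeasure (k:ℝ) 1) :=
    isProbabilityMeasure_gammaMeasure (by positivity) one_pos
  have h2 : IsProbabilityMeasure (gammaMeasure (K:ℝ) 1) :=
    isProbabilityMeasure_gammaMeasure (by positivity) one_pos
  have e1 : Set.Ici t = (Set.Iio t)ᶜ := by simp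
  rw [e1, measure_compl measurableSet_Iio (measure_ne_top _ _),
    measure_compl measurableSet_Iio (measure_ne_top _ _)]
  simp only [measure_univ]
  exact tsub_le_tsub_left (gamma_Iio_mono hk hkK t) 1

lemma gamma_upperSet_mono {k K : ℕ} (hk : 0 < k) (hkK : k ≤ K) {U : Set ℝ}
    (hU : IsUpperSet U) : gammaMeasure k 1 U ≤ gammaMeasure K 1 U := by
  have hK : 0 < K := lt_of_lt_of_le hk hkK
  have h1 : IsProbabilityMeasure (gammaMeasure (k:ℝ) 1) :=
    isProbabilityMeasure_gammaMeasure (by positivity) one_pos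
  have h2 : IsProbabilityMeasure (gammaMeasure (K:ℝ) 1) :=
    isProbabilityMeasure_gammaMeasure (by positivity) one_pos
  rcases Set.eq_empty_or_nonempty U with rfl | hne
  · simp
  by_cases hbdd : BddBelow U
  · set a := sInf U with ha
    have hsub1 : U ⊆ Set.Ici a := fun u hu => csInf_le hbdd hu
    have hsub2 : Set.Ioi a ⊆ U := by
      intro y hy
      obtain ⟨u, hu, hlt⟩ := (csInf_lt_iff hbdd hne).1 hy
      exact hU hlt.le hu
    calc gammaMeasure k 1 U ≤ gammaMeasure k 1 (Set.Ici a) := measure_mono hsub1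
      _ ≤ gammaMeasure K 1 (Set.Ici a) := gamma_Ici_mono hk hkK a
      _ ≤ gammaMeasure K 1 (Set.Ioi a) + gammaMeasure K 1 {a} := by
          rw [← Set.Ioi_union_left]; exact measure_union_le _ _
      _ = gammaMeasure K 1 (Set.Ioi a) := by rw [gamma_singleton]; ring
      _ ≤ gammaMeasure K 1 U := measure_mono hsub2
  · have : U = Set.univ := by
      ext y; simp only [Set.mem_univ, iff_true]
      obtain ⟨u, hu, hlt⟩ := not_bddBelow_iff.1 hbdd y
      exact hU hlt.le hu
    rw [this]; simp

lemma vol_lt_ofReal (c : ℝ≥0∞) : volume ({t : ℝ | ENNReal.ofReal t < c} ∩ Set.Ioi 0) = c := by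
  rcases eq_or_ne c ∞ with rfl | hc
  · have : {t : ℝ | ENNReal.ofReal t < ∞} = Set.univ := by
      ext t; simp [ofReal_lt_top]
    rw [this, Set.univ_inter, Real.volume_Ioi]
  · have : {t : ℝ | ENNReal.ofReal t < c} ∩ Set.Ioi 0 = Set.Ioo 0 c.toReal := by
      ext t
      simp only [Set.mem_inter_iff, Set.mem_setOf_eq, Set.mem_Ioi, Set.mem_Ioo]
      constructor
      · rintro ⟨h1, h2⟩
        exact ⟨h2, (ENNReal.ofReal_lt_iff_lt_toReal h2.le hc).1 h1⟩
      · rintro ⟨h1, h2⟩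
        exact ⟨(ENNReal.ofReal_lt_iff_lt_toReal h1.le hc).2 h2, h1⟩
    rw [this, Real.volume_Ioo, sub_zero, ENNReal.ofReal_toReal hc]

lemma layercake_ennreal {ν : Measure ℝ} [SigmaFinite ν] {f : ℝ → ℝ≥0∞} (hf : Measurable f) :
    ∫⁻ x, f x ∂ν = ∫⁻ t in Set.Ioi (0:ℝ), ν {x | ENNReal.ofReal t < f x} := by
  have hmeasS : MeasurableSet {p : ℝ × ℝ | ENNReal.ofReal p.2 < f p.1} :=
    measurableSet_lt (ENNReal.measurable_ofReal.comp measurable_snd) (hf.comp measurable_fst)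
  have hrep : ∀ x, f x = ∫⁻ t in Set.Ioi (0:ℝ),
      (if ENNReal.ofReal t < f x then (1:ℝ≥0∞) else 0) := by
    intro x
    have hms : MeasurableSet {t : ℝ | ENNReal.ofReal t < f x} :=
      measurableSet_lt ENNReal.measurable_ofReal measurable_const
    have : ∀ t : ℝ, (if ENNReal.ofReal t < f x then (1:ℝ≥0∞) else 0)
        = Set.indicator {t : ℝ | ENNReal.ofReal t < f x} (1 : ℝ → ℝ≥0∞) t := by
      intro t; by_cases h : ENNReal.ofReal t < f x <;> simp [h]
    simp_rw [this]
    rw [lintegral_indicator_one hms, Measure.restrict_apply hms, vol_lt_ofReal]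
  calc ∫⁻ x, f x ∂ν
      = ∫⁻ x, ∫⁻ t in Set.Ioi (0:ℝ), (if ENNReal.ofReal t < f x then (1:ℝ≥0∞) else 0) ∂volume ∂ν := by
        exact lintegral_congr hrep
    _ = ∫⁻ t in Set.Ioi (0:ℝ), ∫⁻ x, (if ENNReal.ofReal t < f x then (1:ℝ≥0∞) else 0) ∂ν ∂volume := by
        apply lintegral_lintegral_swap
        apply Measurable.aemeasurable
        exact Measurable.ite (by exact hmeasS) measurable_const measurable_const
    _ = ∫⁻ t in Set.Ioi (0:ℝ), ν {x | ENNReal.ofReal t < f x} ∂volume := by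
        apply setLIntegral_congr_fun_ae measurableSet_Ioi
        refine ae_of_all _ fun t _ => ?_
        have hms : MeasurableSet {x : ℝ | ENNReal.ofReal t < f x} :=
          measurableSet_lt measurable_const hf
        have : ∀ x : ℝ, (if ENNReal.ofReal t < f x then (1:ℝ≥0∞) else 0)
            = Set.indicator {x : ℝ | ENNReal.ofReal t < f x} (1 : ℝ → ℝ≥0∞) x := by
          intro y; by_cases h : ENNReal.ofReal t < f y <;> simp [h]
        simp_rw [this]
        rw [lintegral_indicator_one hms]

lemma lintegral_mono_upperSet {ν μ : Measure ℝ} [SigmaFinite ν] [SigmaFinite μ]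
    (H : ∀ U : Set ℝ, IsUpperSet U → ν U ≤ μ U) {φ : ℝ → ℝ≥0∞}
    (hφm : Measurable φ) (hmono : Monotone φ) : ∫⁻ x, φ x ∂ν ≤ ∫⁻ x, φ x ∂μ := by
  rw [layercake_ennreal hφm, layercake_ennreal hφm]
  apply lintegral_mono
  intro t
  apply H
  intro a b hab ha
  exact lt_of_lt_of_le ha (hmono hab)

lemma lintegral_anti_upperSet {ν μ : Measure ℝ} [IsProbabilityMeasure ν] [IsProbabilityMeasure μ]
    (H : ∀ U : Set ℝ, IsUpperSet U → μ U ≤ ν U) {φ : ℝ → ℝ≥0∞}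
    (hφm : Measurable φ) (hanti : Antitone φ) : ∫⁻ x, φ x ∂ν ≤ ∫⁻ x, φ x ∂μ := by
  rw [layercake_ennreal hφm, layercake_ennreal hφm]
  apply lintegral_mono
  intro t
  have hms : MeasurableSet {x : ℝ | ENNReal.ofReal t < φ x} :=
    measurableSet_lt measurable_const hφm
  have hlow : IsLowerSet {x : ℝ | ENNReal.ofReal t < φ x} := by
    intro a b hba ha
    exact lt_of_lt_of_le ha (hanti hba)
  show ν {x : ℝ | ENNReal.ofReal t < φ x} ≤ μ {x : ℝ | ENNReal.ofReal t < φ x}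
  rw [← compl_compl {x : ℝ | ENNReal.ofReal t < φ x}]
  rw [measure_compl hms.compl (measure_ne_top _ _), measure_compl hms.compl (measure_ne_top _ _)]
  simp only [measure_univ]
  exact tsub_le_tsub_left (H _ hlow.compl) 1

lemma lmarginal_dom {ι : Type*} [Fintype ι] [DecidableEq ι]
    (m m' : ι → Measure ℝ) [∀ i, IsProbabilityMeasure (m i)] [∀ i, IsProbabilityMeasure (m' i)]
    (dir : ι → Bool)
    (hdom : ∀ i, dir i = true → ∀ U : Set ℝ, IsUpperSet U → m' i U ≤ m i U)
    (hdom' : ∀ i, dir i = false → ∀ U : Set ℝ, IsUpperSet U → m i U ≤ m' i U)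
    (f : (ι → ℝ) → ℝ≥0∞) (hf : Measurable f)
    (hmono : ∀ i, dir i = true → ∀ y : ι → ℝ, Monotone (fun t => f (Function.update y i t)))
    (hanti : ∀ i, dir i = false → ∀ y : ι → ℝ, Antitone (fun t => f (Function.update y i t)))
    (s : Finset ι) : ∀ y : ι → ℝ, (∫⋯∫⁻_s, f ∂m') y ≤ (∫⋯∫⁻_s, f ∂m) y := by
  induction s using Finset.induction with
  | empty => intro y; simp [MeasureTheory.lmarginal_empty]
  | @insert i s hi ih =>
    intro y
    rw [lmarginal_insert _ hf hi, lmarginal_insert _ hf hi]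
    have step1 : ∫⁻ t, (∫⋯∫⁻_s, f ∂m') (Function.update y i t) ∂(m' i)
        ≤ ∫⁻ t, (∫⋯∫⁻_s, f ∂m) (Function.update y i t) ∂(m' i) :=
      lintegral_mono fun t => ih _
    refine step1.trans ?_
    have hφm : Measurable fun t => (∫⋯∫⁻_s, f ∂m) (Function.update y i t) :=
      (hf.lmarginal m).comp (measurable_update y)
    cases hdir : dir i with
    | true =>
      refine lintegral_mono_upperSet (hdom i hdir) hφm ?_
      intro t t' htt'
      show (∫⋯∫⁻_s, f ∂m) (Function.update y i t) ≤ (∫⋯∫⁻_s, f ∂m) (Function.update y i t')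
      rw [lmarginal_update_of_notMem hf hi, lmarginal_update_of_notMem hf hi]
      exact lmarginal_mono (fun z => hmono i hdir z htt') y
    | false =>
      refine lintegral_anti_upperSet (hdom' i hdir) hφm ?_
      intro t t' htt'
      show (∫⋯∫⁻_s, f ∂m) (Function.update y i t') ≤ (∫⋯∫⁻_s, f ∂m) (Function.update y i t)
      rw [lmarginal_update_of_notMem hf hi, lmarginal_update_of_notMem hf hi]
      exact lmarginal_mono (fun z => hanti i hdir z htt') y

lemma pi_dom {ι : Type*} [Fintype ι] [DecidableEq ι]
    (m m' : ι → Measure ℝ) [∀ i, IsProbabilityMeasure (m i)] [∀ i, IsProbabilityMeasure (m' i)]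
    (dir : ι → Bool)
    (hdom : ∀ i, dir i = true → ∀ U : Set ℝ, IsUpperSet U → m' i U ≤ m i U)
    (hdom' : ∀ i, dir i = false → ∀ U : Set ℝ, IsUpperSet U → m i U ≤ m' i U)
    (A : Set (ι → ℝ)) (hA : MeasurableSet A)
    (hup : ∀ i, dir i = true → ∀ (y : ι → ℝ) (t t' : ℝ), t ≤ t' →
      Function.update y i t ∈ A → Function.update y i t' ∈ A)
    (hdown : ∀ i, dir i = false → ∀ (y : ι → ℝ) (t t' : ℝ), t ≤ t' →
      Function.update y i t' ∈ A → Function.update y i t ∈ A) :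
    Measure.pi m' A ≤ Measure.pi m A := by
  have hindm : Measurable (A.indicator (1 : (ι → ℝ) → ℝ≥0∞)) :=
    measurable_one.indicator hA
  have hmono : ∀ i, dir i = true → ∀ y : ι → ℝ,
      Monotone (fun t => A.indicator (1 : (ι → ℝ) → ℝ≥0∞) (Function.update y i t)) := by
    intro i hi y t t' htt'
    by_cases hm : Function.update y i t ∈ A
    · simp only [Set.indicator_of_mem hm, Set.indicator_of_mem (hup i hi y t t' htt' hm)]
      exact le_rfl
    · simp only [Set.indicator_of_notMem hm]
      exact zero_le
  have hanti : ∀ i, dir i = false → ∀ y : ι → ℝ,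
      Antitone (fun t => A.indicator (1 : (ι → ℝ) → ℝ≥0∞) (Function.update y i t)) := by
    intro i hi y t t' htt'
    by_cases hm : Function.update y i t' ∈ A
    · simp only [Set.indicator_of_mem hm, Set.indicator_of_mem (hdown i hi y t t' htt' hm)]
      exact le_rfl
    · simp only [Set.indicator_of_notMem hm]
      exact zero_le
  have key := lmarginal_dom m m' dir hdom hdom' _ hindm hmono hanti Finset.univ (fun _ => 0)
  rwa [← lintegral_indicator_one hA, ← lintegral_indicator_one hA,
    lintegral_eq_lmarginal_univ (fun _ => (0:ℝ)), lintegral_eq_lmarginal_univ (fun _ => (0:ℝ))]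

lemma iIndepFun_reindex {ι ι' Ω : Type*} [MeasurableSpace Ω] {μ : Measure Ω}
    (e : ι' → ι) (he : Function.Injective e) (f : ι → Ω → ℝ)
    (h : iIndepFun f μ) :
    iIndepFun (fun i' => f (e i')) μ := by
  classical
  rw [iIndepFun_iff_measure_inter_preimage_eq_mul] at h ⊢
  intro S sets hsets
  set sets' : ι → Set ℝ := Function.extend e sets (fun _ => Set.univ) with hsets'def
  have hext : ∀ i' : ι', sets' (e i') = sets i' := fun i' => Function.Injective.extend_apply he _ _ _
  have hmeas : ∀ i ∈ S.image e, MeasurableSet (sets' i) := by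
    intro i hi
    obtain ⟨i', hi', rfl⟩ := Finset.mem_image.1 hi
    rw [hext]; exact hsets i' hi'
  have h1 := h (S.image e) hmeas
  have hInter : (⋂ i ∈ S.image e, f i ⁻¹' sets' i) = ⋂ i' ∈ S, f (e i') ⁻¹' sets i' := by
    rw [Finset.set_biInter_finset_image]
    exact Set.iInter₂_congr fun i' _ => by rw [hext]
  have hProd : (∏ i ∈ S.image e, μ (f i ⁻¹' sets' i)) = ∏ i' ∈ S, μ (f (e i') ⁻¹' sets i') := by
    rw [Finset.prod_image (fun a _ b _ hab => he hab)]
    exact Finset.prod_congr rfl fun i' _ => by rw [hext]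
  rw [← hInter, ← hProd]; exact h1

lemma joint_law_pi {ι Ω : Type*} [Fintype ι] [MeasurableSpace Ω] (μ : Measure Ω)
    [IsProbabilityMeasure μ] (f : ι → Ω → ℝ) (hf : ∀ i, Measurable (f i))
    (hind : iIndepFun f μ) :
    Measure.map (fun ω i => f i ω) μ = Measure.pi (fun i => Measure.map (f i) μ) := by
  have hfm : Measurable (fun ω i => f i ω) := measurable_pi_lambda _ fun i => hf i
  refine (Measure.pi_eq fun s hs => ?_).symm
  rw [Measure.map_apply hfm (MeasurableSet.univ_pi hs)]
  have hpre : (fun ω i => f i ω) ⁻¹' Set.pi Set.univ s = ⋂ i ∈ Finset.univ, f i ⁻¹' s i := by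
    ext ω; simp [Set.mem_pi]
  rw [hpre, hind.measure_inter_preimage_eq_mul Finset.univ (fun i _ => hs i)]
  exact Finset.prod_congr rfl fun i _ => (Measure.map_apply (hf i) (hs i)).symm

noncomputable def Aset (c : ℕ → ℝ) (b : ℕ → ℝ≥0∞) (N k : ℕ) : Set ((Fin N ⊕ Fin k) → ℝ) :=
  {y | ∃ n : Fin N, b n * (∑ m : Fin k, if (m:ℕ) = (n:ℕ) then 0
      else ENNReal.ofReal (c m * y (Sum.inr m))) ≤ ENNReal.ofReal (c n * y (Sum.inl n))}

lemma Aset_measurable (c : ℕ → ℝ) (b : ℕ → ℝ≥0∞) (N k : ℕ) : MeasurableSet (Aset c b N k) := by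
  have : Aset c b N k = ⋃ n : Fin N, {y : (Fin N ⊕ Fin k) → ℝ |
      b n * (∑ m : Fin k, if (m:ℕ) = (n:ℕ) then 0
        else ENNReal.ofReal (c m * y (Sum.inr m))) ≤ ENNReal.ofReal (c n * y (Sum.inl n))} := by
    ext y; simp [Aset]
  rw [this]
  refine MeasurableSet.iUnion fun n => ?_
  refine measurableSet_le (Measurable.const_mul ?_ _)
    (ENNReal.measurable_ofReal.comp ((measurable_pi_apply _).const_mul _))
  refine Finset.measurable_sum _ fun m _ => ?_
  by_cases hm : (m:ℕ) = (n:ℕ)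
  · simp [hm]
  · simp only [hm, if_false]
    exact ENNReal.measurable_ofReal.comp ((measurable_pi_apply _).const_mul _)

lemma Aset_up (c : ℕ → ℝ) (hc : ∀ m, 0 < c m) (b : ℕ → ℝ≥0∞) (N k : ℕ) (a : Fin N)
    (y : (Fin N ⊕ Fin k) → ℝ) (t t' : ℝ) (htt' : t ≤ t')
    (hy : Function.update y (Sum.inl a) t ∈ Aset c b N k) :
    Function.update y (Sum.inl a) t' ∈ Aset c b N k := by
  obtain ⟨n, hn⟩ := hy
  refine ⟨n, ?_⟩
  have hsum : ∀ (u : ℝ), (∑ m : Fin k, if (m:ℕ) = (n:ℕ) then 0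
      else ENNReal.ofReal (c m * Function.update y (Sum.inl a) u (Sum.inr m)))
      = ∑ m : Fin k, if (m:ℕ) = (n:ℕ) then 0
      else ENNReal.ofReal (c m * y (Sum.inr m)) := by
    intro u
    refine Finset.sum_congr rfl fun m _ => ?_
    rw [Function.update_of_ne (by simp)]
  rw [hsum] at hn ⊢
  refine le_trans hn ?_
  by_cases hna : n = a
  · subst hna
    rw [Function.update_self, Function.update_self]
    exact ENNReal.ofReal_le_ofReal (by nlinarith [hc (n:ℕ), (hc (n:ℕ)).le])
  · rw [Function.update_of_ne (by simp [hna]), Function.update_of_ne (by simp [hna])]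

lemma Aset_down (c : ℕ → ℝ) (hc : ∀ m, 0 < c m) (b : ℕ → ℝ≥0∞) (N k : ℕ) (mm : Fin k)
    (y : (Fin N ⊕ Fin k) → ℝ) (t t' : ℝ) (htt' : t ≤ t')
    (hy : Function.update y (Sum.inr mm) t' ∈ Aset c b N k) :
    Function.update y (Sum.inr mm) t ∈ Aset c b N k := by
  obtain ⟨n, hn⟩ := hy
  refine ⟨n, ?_⟩
  have hS : ∀ (u : ℝ), Function.update y (Sum.inr mm) u (Sum.inl n) = y (Sum.inl n) :=
    fun u => Function.update_of_ne (by simp) _ _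
  rw [hS] at hn ⊢
  refine le_trans (le_trans (mul_le_mul_right ?_ _) hn) le_rfl
  refine Finset.sum_le_sum fun m _ => ?_
  by_cases hmn : (m:ℕ) = (n:ℕ)
  · simp [hmn]
  · simp only [hmn, if_false]
    by_cases hmmm : m = mm
    · subst hmmm
      rw [Function.update_self, Function.update_self]
      exact ENNReal.ofReal_le_ofReal (by nlinarith [hc (m:ℕ), (hc (m:ℕ)).le])
    · rw [Function.update_of_ne (by simp [hmmm]), Function.update_of_ne (by simp [hmmm])]

section FEq
variable {Ω : Type*} [MeasurableSpace Ω] (μ : Measure Ω) [IsProbabilityMeasure μ]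
  (h g : ℕ → Ω → ℝ)

lemma F_eq_pi (hhm : ∀ m, Measurable (h m)) (hgm : ∀ m, Measurable (g m))
    (hindep : iIndepFun (Sum.elim h g) μ)
    (Δ Ψ : ℕ → ℕ)
    (hhd : ∀ n, Measure.map (h n) μ = gammaMeasure (Δ n) 1)
    (hgd : ∀ n, Measure.map (g n) μ = gammaMeasure (Ψ n) 1)
    (c : ℕ → ℝ) (b : ℕ → ℝ≥0∞) (N k : ℕ) :
    μ (⋃ n ∈ Finset.range N, {ω | b n * (∑ m ∈ Finset.range k,
        if m = n then 0 else ENNReal.ofReal (c m * g m ω)) ≤ ENNReal.ofReal (c n * h n ω)})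
      = Measure.pi (fun i : Fin N ⊕ Fin k =>
          gammaMeasure ((Sum.elim (fun a : Fin N => Δ a) (fun m : Fin k => Ψ m)) i) 1)
        (Aset c b N k) := by
  classical
  set e : (Fin N ⊕ Fin k) → (ℕ ⊕ ℕ) := Sum.map Fin.val Fin.val with he_def
  have he : Function.Injective e :=
    Function.Injective.sumMap Fin.val_injective Fin.val_injective
  set f : (Fin N ⊕ Fin k) → Ω → ℝ := fun i => Sum.elim h g (e i) with hf_def
  have hfm : ∀ i, Measurable (f i) := by
    intro i; cases i with
    | inl a => exact hhm a
    | inr m => exact hgm m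
  have hind' : iIndepFun f μ :=
    iIndepFun_reindex e he _ hindep
  have hlaw : ∀ i, Measure.map (f i) μ
      = gammaMeasure ((Sum.elim (fun a : Fin N => Δ a) (fun m : Fin k => Ψ m)) i) 1 := by
    intro i; cases i with
    | inl a => exact hhd a
    | inr m => exact hgd m
  have hVm : Measurable (fun ω i => f i ω) := measurable_pi_lambda _ fun i => hfm i
  have hpre : (fun ω i => f i ω) ⁻¹' (Aset c b N k)
      = ⋃ n ∈ Finset.range N, {ω | b n * (∑ m ∈ Finset.range k,
        if m = n then 0 else ENNReal.ofReal (c m * g m ω)) ≤ ENNReal.ofReal (c n * h n ω)} := by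
    ext ω
    simp only [Set.mem_preimage, Aset, Set.mem_setOf_eq, Set.mem_iUnion, Finset.mem_range]
    constructor
    · rintro ⟨n, hn⟩
      refine ⟨(n:ℕ), n.isLt, ?_⟩
      rw [← Fin.sum_univ_eq_sum_range (fun m => if m = (n:ℕ) then 0
        else ENNReal.ofReal (c m * g m ω)) k]
      exact hn
    · rintro ⟨n, hnN, hn⟩
      refine ⟨⟨n, hnN⟩, ?_⟩
      rw [← Fin.sum_univ_eq_sum_range (fun m => if m = n then 0
        else ENNReal.ofReal (c m * g m ω)) k] at hn
      exact hn
  rw [← hpre, ← Measure.map_apply hVm (Aset_measurable c b N k),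
    joint_law_pi μ f hfm hind']
  have : (fun i : Fin N ⊕ Fin k => Measure.map (f i) μ)
      = fun i => gammaMeasure ((Sum.elim (fun a : Fin N => Δ a) (fun m : Fin k => Ψ m)) i) 1 :=
    funext hlaw
  rw [this]
end FEq

section RateIff
variable {Ω : Type*} (P : ℕ → ℝ) (x : ℕ → EuclideanSpace ℝ (Fin 2)) (α : ℝ)
  (O T : ℕ → ℝ) (h g : ℕ → Ω → ℝ)

/-- threshold -/
noncomputable def thr (O T : ℕ → ℝ) (n : ℕ) : ℝ := 2 ^ (T n / O n) - 1

lemma thr_pos {O T : ℕ → ℝ} (hO : 0 < O n) (hT : 0 < T n) : 0 < thr O T n := by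
  have h1 : (0:ℝ) < T n / O n := div_pos hT hO
  have : (1:ℝ) < 2 ^ (T n / O n) := by
    rw [show (1:ℝ) = 2 ^ (0:ℝ) by simp]
    exact Real.rpow_lt_rpow_left_iff (by norm_num) |>.2 h1
  simp [thr]; linarith

lemma ofReal_lt_SIR_iff {n : ℕ} {ω : Ω} {θ : ℝ} (hθ : 0 < θ) :
    ENNReal.ofReal θ < SIR P x α h g n ω ↔
      ENNReal.ofReal θ * interference P x α g n ω
        < ENNReal.ofReal (P n * h n ω * ‖x n‖ ^ (-α)) := by
  rw [SIR]
  exact ENNReal.lt_div_iff_mul_lt (Or.inr ofReal_ne_top)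
    (Or.inr (by simpa using hθ.not_ge))

lemma rate_lt_iff {n : ℕ} {ω : Ω} (hO : 0 < O n) (hT : 0 < T n) :
    ENNReal.ofReal (T n) < rate P x α O h g n ω ↔
      ENNReal.ofReal (thr O T n) * interference P x α g n ω
        < ENNReal.ofReal (P n * h n ω * ‖x n‖ ^ (-α)) := by
  rw [← ofReal_lt_SIR_iff P x α h g (thr_pos hO hT)]
  rw [rate]
  split_ifs with hinf
  · simp only [hinf]
    constructor
    · intro _; exact ofReal_lt_top
    · intro _; exact ofReal_lt_top
  · have hnn : (0:ℝ) ≤ 1 + (SIR P x α h g n ω).toReal := by positivity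
    have hpos : (0:ℝ) < 1 + (SIR P x α h g n ω).toReal := by positivity
    rw [ENNReal.ofReal_lt_ofReal_iff_of_nonneg hT.le,
      ENNReal.ofReal_lt_iff_lt_toReal (thr_pos hO hT).le hinf]
    rw [show T n < O n * Real.logb 2 (1 + (SIR P x α h g n ω).toReal)
        ↔ T n / O n < Real.logb 2 (1 + (SIR P x α h g n ω).toReal) by
      rw [div_lt_iff₀ hO]; constructor <;> intro hh <;> nlinarith]
    rw [Real.lt_logb_iff_rpow_lt (by norm_num) hpos]
    unfold thr
    constructor <;> intro hh <;> linarith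

end RateIff

lemma gamma_Iic_zero (a r : ℝ) : gammaMeasure a r (Set.Iic 0) = 0 := by
  have : Set.Iic (0:ℝ) = Set.Iio 0 ∪ {0} := by
    ext t; simp [le_iff_lt_or_eq]
  rw [this]
  refine measure_union_null ?_ ?_
  · rw [gammaMeasure, withDensity_apply _ measurableSet_Iio]
    exact ProbabilityTheory.lintegral_gammaPDF_of_nonpos le_rfl
  · rw [gammaMeasure, withDensity_apply _ (measurableSet_singleton 0),
      Measure.restrict_singleton]
    simp

lemma gamma_singleton' (a r t : ℝ) : gammaMeasure a r {t} = 0 := by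
  rw [gammaMeasure, withDensity_apply _ (measurableSet_singleton t), Measure.restrict_singleton]
  simp

section NullDiff
variable {Ω : Type*} [MeasurableSpace Ω] (μ : Measure Ω) [IsProbabilityMeasure μ]
  (P : ℕ → ℝ) (x : ℕ → EuclideanSpace ℝ (Fin 2)) (α : ℝ)
  (h g : ℕ → Ω → ℝ)

lemma interference_measurable (hgm : ∀ m, Measurable (g m)) (n : ℕ) :
    Measurable (interference P x α g n) := by
  apply Measurable.ennreal_tsum
  intro m
  by_cases hm : m = n
  · simp [hm]
  · simp only [hm, if_false]
    exact ENNReal.measurable_ofReal.comp (((hgm m).const_mul _).mul_const _)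

lemma indepFun_interference (hhm : ∀ m, Measurable (h m)) (hgm : ∀ m, Measurable (g m))
    (hindep : iIndepFun (Sum.elim h g) μ) (n : ℕ) :
    IndepFun (interference P x α g n) (h n) μ := by
  classical
  have hindep' := (iIndepFun_iff_iIndep _ _ _).1 hindep
  have h_le : ∀ i : ℕ ⊕ ℕ, MeasurableSpace.comap (Sum.elim h g i)
      (inferInstance : MeasurableSpace ℝ) ≤ (inferInstance : MeasurableSpace Ω) := by
    intro i
    cases i with
    | inl a => exact (hhm a).comap_le
    | inr b => exact (hgm b).comap_le
  have hdisj : Disjoint (Set.range (Sum.inr : ℕ → ℕ ⊕ ℕ)) ({Sum.inl n} : Set (ℕ ⊕ ℕ)) := by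
    simp [Set.disjoint_left]
  have hInd := indep_iSup_of_disjoint h_le hindep' hdisj
  set M : MeasurableSpace Ω := ⨆ i ∈ Set.range (Sum.inr : ℕ → ℕ ⊕ ℕ),
    MeasurableSpace.comap (Sum.elim h g i) inferInstance with hM
  have hgM : ∀ m : ℕ, Measurable[M] (g m) := by
    intro m
    apply Measurable.of_comap_le
    have : MeasurableSpace.comap (Sum.elim h g (Sum.inr m)) inferInstance ≤ M := by
      apply le_iSup₂ (f := fun (i : ℕ ⊕ ℕ) (_ : i ∈ Set.range Sum.inr) =>
        MeasurableSpace.comap (Sum.elim h g i) inferInstance) (Sum.inr m) ⟨m, rfl⟩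
    exact this
  have hIM : Measurable[M] (interference P x α g n) := by
    refine Measurable.ennreal_tsum (α := Ω) (mα := M) ?_
    intro m
    by_cases hm : m = n
    · simp only [hm, if_pos rfl]; exact @measurable_const _ Ω _ M _
    · simp only [hm, if_false]
      exact ENNReal.measurable_ofReal.comp ((((hgM m)).const_mul _).mul_const _)
  have hhM : Measurable[⨆ i ∈ ({Sum.inl n} : Set (ℕ ⊕ ℕ)),
      MeasurableSpace.comap (Sum.elim h g i) inferInstance] (h n) := by
    apply Measurable.of_comap_le
    apply le_iSup₂ (f := fun (i : ℕ ⊕ ℕ) (_ : i ∈ ({Sum.inl n} : Set (ℕ ⊕ ℕ))) =>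
      MeasurableSpace.comap (Sum.elim h g i) inferInstance) (Sum.inl n) rfl
  exact indep_of_indep_of_le_right (indep_of_indep_of_le_left hInd hIM.comap_le) hhM.comap_le

lemma null_eq_event (hhm : ∀ m, Measurable (h m)) (hgm : ∀ m, Measurable (g m))
    (hindep : iIndepFun (Sum.elim h g) μ)
    (Δ : ℕ → ℕ) (hhd : ∀ n, Measure.map (h n) μ = gammaMeasure (Δ n) 1)
    (n : ℕ) {b : ℝ≥0∞} (hb0 : b ≠ 0) (hbt : b ≠ ∞) (hc : 0 < P n * ‖x n‖ ^ (-α)) :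
    μ {ω | b * interference P x α g n ω
        = ENNReal.ofReal (P n * h n ω * ‖x n‖ ^ (-α))} = 0 := by
  classical
  set c : ℝ := P n * ‖x n‖ ^ (-α) with hcdef
  set I : Ω → ℝ≥0∞ := interference P x α g n with hIdef
  have hIm : Measurable I := interference_measurable P x α g hgm n
  set D : Set (ℝ≥0∞ × ℝ) := {p | ENNReal.ofReal (c * p.2) = b * p.1 ∧ 0 < p.2} with hD
  have hDm : MeasurableSet D := by
    apply MeasurableSet.inter
    · exact measurableSet_eq_fun (ENNReal.measurable_ofReal.comp (measurable_snd.const_mul c))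
        (measurable_fst.const_mul b)
    · exact measurableSet_lt measurable_const measurable_snd
  have hsub : {ω | b * I ω = ENNReal.ofReal (P n * h n ω * ‖x n‖ ^ (-α))}
      ⊆ {ω | h n ω ≤ 0} ∪ {ω | (I ω, h n ω) ∈ D} := by
    intro ω hω
    rcases le_or_gt (h n ω) 0 with hh | hh
    · exact Or.inl hh
    · refine Or.inr ⟨?_, hh⟩
      have : P n * h n ω * ‖x n‖ ^ (-α) = c * h n ω := by ring
      rw [← this, hω.symm]
  refine measure_mono_null hsub (measure_union_null ?_ ?_)
  · have : {ω | h n ω ≤ 0} = h n ⁻¹' Set.Iic 0 := rfl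
    rw [this, ← Measure.map_apply (hhm n) measurableSet_Iic, hhd n, gamma_Iic_zero]
  · have : {ω | (I ω, h n ω) ∈ D} = (fun ω => (I ω, h n ω)) ⁻¹' D := rfl
    rw [this, ← Measure.map_apply (hIm.prodMk (hhm n)) hDm]
    have hIndep := indepFun_interference μ P x α h g hhm hgm hindep n
    rw [(indepFun_iff_map_prod_eq_prod_map_map hIm.aemeasurable
      (hhm n).aemeasurable).1 hIndep]
    rw [Measure.prod_apply hDm]
    have hzero : ∀ v : ℝ≥0∞, (Measure.map (h n) μ) (Prod.mk v ⁻¹' D) = 0 := by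
      intro v
      have hsub2 : Prod.mk v ⁻¹' D ⊆ {(b * v).toReal / c} := by
        intro u hu
        obtain ⟨heq, hupos⟩ := hu
        have hcu : 0 < c * u := by positivity
        have : (b * v).toReal = c * u := by rw [← heq, ENNReal.toReal_ofReal hcu.le]
        simp only [Set.mem_singleton_iff, this]
        field_simp
      refine measure_mono_null hsub2 ?_
      rw [hhd n]
      exact gamma_singleton' _ _ _
    rw [lintegral_congr hzero, lintegral_zero]
end NullDiff

section Decomp
variable {Ω : Type*} [MeasurableSpace Ω] (μ : Measure Ω) [IsProbabilityMeasure μ]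

lemma decomp_supinf (b : ℕ → ℝ≥0∞) (Sf : ℕ → Ω → ℝ≥0∞) (term : ℕ → Ω → ℝ≥0∞)
    (hSm : ∀ n, Measurable (Sf n)) (htm : ∀ m, Measurable (term m)) :
    μ (⋃ n, {ω | b n * (∑' m, if m = n then 0 else term m ω) ≤ Sf n ω})
      = ⨆ N, ⨅ k, μ (⋃ n ∈ Finset.range N,
          {ω | b n * (∑ m ∈ Finset.range k, if m = n then 0 else term m ω) ≤ Sf n ω}) := by
  classical
  set A : ℕ → ℕ → Set Ω := fun n k =>
    {ω | b n * (∑ m ∈ Finset.range k, if m = n then 0 else term m ω) ≤ Sf n ω} with hA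
  have hAanti : ∀ n, Antitone (A n) := by
    intro n k k' hkk'
    intro ω hω
    simp only [A, Set.mem_setOf_eq] at hω ⊢
    refine le_trans (mul_le_mul_right ?_ _) hω
    exact Finset.sum_le_sum_of_subset (Finset.range_subset_range.2 hkk')
  have hAm : ∀ n k, MeasurableSet (A n k) := by
    intro n k
    refine measurableSet_le (Measurable.const_mul ?_ _) (hSm n)
    refine Finset.measurable_sum _ fun m _ => ?_
    by_cases hm : m = n
    · simp [hm]
    · simp only [hm, if_false]
      exact htm m
  have hAiInter : ∀ n, {ω | b n * (∑' m, if m = n then 0 else term m ω) ≤ Sf n ω}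
      = ⋂ k, A n k := by
    intro n
    ext ω
    simp only [Set.mem_setOf_eq, Set.mem_iInter, A]
    have htsum : (∑' m, if m = n then 0 else term m ω)
        = ⨆ k, ∑ m ∈ Finset.range k, if m = n then 0 else term m ω :=
      ENNReal.tsum_eq_iSup_nat
    rw [htsum, ENNReal.mul_iSup, iSup_le_iff]
  have hswap : ∀ N : ℕ, (⋃ n ∈ Finset.range N, ⋂ k, A n k)
      = ⋂ k, ⋃ n ∈ Finset.range N, A n k := by
    intro N
    apply Set.Subset.antisymm
    · intro ω hω
      simp only [Set.mem_iUnion, Set.mem_iInter] at hω ⊢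
      obtain ⟨n, hn, hωn⟩ := hω
      exact fun k => ⟨n, hn, hωn k⟩
    · intro ω hω
      simp only [Set.mem_iUnion, Set.mem_iInter] at hω ⊢
      have key : ∃ n < N, {k | ω ∈ A n k}.Infinite := by
        by_contra hcon
        push_neg at hcon
        have hfin : (⋃ n ∈ Set.Iio N, {k | ω ∈ A n k}).Finite := by
          refine Set.Finite.biUnion (Set.finite_Iio N) ?_
          intro n hn
          exact Set.not_infinite.1 (by simpa using hcon n hn)
        have huniv : (Set.univ : Set ℕ) ⊆ ⋃ n ∈ Set.Iio N, {k | ω ∈ A n k} := by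
          intro k _
          obtain ⟨n, hn, hωn⟩ := hω k
          simp only [Set.mem_iUnion]
          exact ⟨n, Finset.mem_range.1 hn, hωn⟩
        exact Set.infinite_univ (hfin.subset huniv)
      obtain ⟨n, hn, hinf⟩ := key
      refine ⟨n, Finset.mem_range.2 hn, fun k => ?_⟩
      obtain ⟨k', hk', hkk'⟩ := hinf.exists_gt k
      exact hAanti n hkk'.le hk'
  have hmono : Monotone (fun N => ⋃ n ∈ Finset.range N, ⋂ k, A n k) := by
    intro N N' hNN'
    apply Set.biUnion_subset_biUnion_left
    intro n hn
    exact Finset.mem_range.2 (lt_of_lt_of_le (Finset.mem_range.1 hn) hNN')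
  calc μ (⋃ n, {ω | b n * (∑' m, if m = n then 0 else term m ω) ≤ Sf n ω})
      = μ (⋃ N, ⋃ n ∈ Finset.range N, ⋂ k, A n k) := by
        congr 1
        simp_rw [hAiInter]
        ext ω
        simp only [Set.mem_iUnion]
        constructor
        · rintro ⟨n, hn⟩; exact ⟨n+1, n, Finset.mem_range.2 (Nat.lt_succ_self n), hn⟩
        · rintro ⟨N, n, _, hn⟩; exact ⟨n, hn⟩
    _ = ⨆ N, μ (⋃ n ∈ Finset.range N, ⋂ k, A n k) :=
        Directed.measure_iUnion hmono.directed_le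
    _ = ⨆ N, ⨅ k, μ (⋃ n ∈ Finset.range N, A n k) := by
        refine iSup_congr fun N => ?_
        rw [hswap]
        apply Directed.measure_iInter
        · intro k
          exact (MeasurableSet.biUnion (Finset.range N).countable_toSet
            (fun n _ => hAm n k)).nullMeasurableSet
        · intro k k'
          refine ⟨max k k', ?_, ?_⟩
          · intro ω hω
            simp only [Set.mem_iUnion] at hω ⊢
            obtain ⟨n, hn, hωn⟩ := hω
            exact ⟨n, hn, hAanti n (le_max_left _ _) hωn⟩
          · intro ω hω
            simp only [Set.mem_iUnion] at hω ⊢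
            obtain ⟨n, hn, hωn⟩ := hω
            exact ⟨n, hn, hAanti n (le_max_right _ _) hωn⟩
        · exact ⟨0, measure_ne_top _ _⟩
end Decomp

section Wrappers
variable {Ω : Type*} [MeasurableSpace Ω] (μ : Measure Ω) [IsProbabilityMeasure μ]
  (P : ℕ → ℝ) (x : ℕ → EuclideanSpace ℝ (Fin 2)) (α : ℝ) (O T : ℕ → ℝ)
  (h g : ℕ → Ω → ℝ)

lemma tsum_interference_eq (n : ℕ) (ω : Ω) :
    interference P x α g n ω
      = ∑' m, if m = n then 0 else ENNReal.ofReal (P m * ‖x m‖ ^ (-α) * g m ω) := by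
  refine tsum_congr fun m => ?_
  by_cases hm : m = n
  · simp [hm]
  · simp only [hm, if_false]
    congr 1
    ring

lemma signal_eq (n : ℕ) (ω : Ω) :
    ENNReal.ofReal (P n * h n ω * ‖x n‖ ^ (-α))
      = ENNReal.ofReal (P n * ‖x n‖ ^ (-α) * h n ω) := by
  congr 1; ring

lemma event_eq (hO : ∀ n, 0 < O n) (hT : ∀ n, 0 < T n) :
    {ω | ∃ n : ℕ, ENNReal.ofReal (T n) < rate P x α O h g n ω}
      = ⋃ n, {ω | ENNReal.ofReal (thr O T n)
          * (∑' m, if m = n then 0 else ENNReal.ofReal (P m * ‖x m‖ ^ (-α) * g m ω))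
          < ENNReal.ofReal (P n * ‖x n‖ ^ (-α) * h n ω)} := by
  ext ω
  simp only [Set.mem_setOf_eq, Set.mem_iUnion]
  refine exists_congr fun n => ?_
  rw [rate_lt_iff P x α O T h g (hO n) (hT n), tsum_interference_eq P x α g n ω,
    signal_eq P x α h n ω]

lemma null_eq_event2 (hhm : ∀ m, Measurable (h m)) (hgm : ∀ m, Measurable (g m))
    (hindep : iIndepFun (Sum.elim h g) μ)
    (Δ : ℕ → ℕ) (hhd : ∀ n, Measure.map (h n) μ = gammaMeasure (Δ n) 1)
    (n : ℕ) {θ : ℝ} (hθ : 0 < θ) (hc : 0 < P n * ‖x n‖ ^ (-α)) :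
    μ {ω | ENNReal.ofReal θ
        * (∑' m, if m = n then 0 else ENNReal.ofReal (P m * ‖x m‖ ^ (-α) * g m ω))
        = ENNReal.ofReal (P n * ‖x n‖ ^ (-α) * h n ω)} = 0 := by
  have hsets : {ω | ENNReal.ofReal θ
        * (∑' m, if m = n then 0 else ENNReal.ofReal (P m * ‖x m‖ ^ (-α) * g m ω))
        = ENNReal.ofReal (P n * ‖x n‖ ^ (-α) * h n ω)}
      = {ω | ENNReal.ofReal θ * interference P x α g n ω
          = ENNReal.ofReal (P n * h n ω * ‖x n‖ ^ (-α))} := by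
    ext ω
    rw [Set.mem_setOf_eq, Set.mem_setOf_eq, tsum_interference_eq P x α g n ω,
      signal_eq P x α h n ω]
  rw [hsets]
  exact null_eq_event μ P x α h g hhm hgm hindep Δ hhd n
    (by simpa using hθ) ENNReal.ofReal_ne_top hc
end Wrappers

end Aux

/-- Rate-coverage ordering: larger direct-link shapes `Δ` and smaller interfering shapes `Ψ`
give a larger rate coverage. -/

theorem rate_coverage_ordering
    (α : ℝ) (hα : 2 < α)
    (x : ℕ → EuclideanSpace ℝ (Fin 2)) (hx : ∀ n, x n ≠ 0)
    (P : ℕ → ℝ) (hP : ∀ n, 0 < P n)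
    (O : ℕ → ℝ) (hO : ∀ n, 0 < O n)
    (T : ℕ → ℝ) (hT : ∀ n, 0 < T n)
    (Δ Ψ Δ' Ψ' : ℕ → ℕ)
    (hΔpos : ∀ n, 0 < Δ n) (hΨpos : ∀ n, 0 < Ψ n)
    (hΔ'pos : ∀ n, 0 < Δ' n) (hΨ'pos : ∀ n, 0 < Ψ' n)
    (hΔ : ∀ n, Δ' n ≤ Δ n) (hΨ : ∀ n, Ψ n ≤ Ψ' n)
    {Ω : Type*} [MeasurableSpace Ω] (μ : Measure Ω) [IsProbabilityMeasure μ]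
    {Ω' : Type*} [MeasurableSpace Ω'] (μ' : Measure Ω') [IsProbabilityMeasure μ']
    (h g : ℕ → Ω → ℝ) (h' g' : ℕ → Ω' → ℝ)
    (hhm : ∀ n, Measurable (h n)) (hgm : ∀ n, Measurable (g n))
    (hh'm : ∀ n, Measurable (h' n)) (hg'm : ∀ n, Measurable (g' n))
    (hindep : iIndepFun (Sum.elim h g) μ)
    (hindep' : iIndepFun (Sum.elim h' g') μ')
    (hhd : ∀ n, Measure.map (h n) μ = gammaMeasure (Δ n) 1)
    (hgd : ∀ n, Measure.map (g n) μ = gammaMeasure (Ψ n) 1)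
    (hh'd : ∀ n, Measure.map (h' n) μ' = gammaMeasure (Δ' n) 1)
    (hg'd : ∀ n, Measure.map (g' n) μ' = gammaMeasure (Ψ' n) 1) :
    μ' {ω | ∃ n : ℕ, ENNReal.ofReal (T n) < rate P x α O h' g' n ω} ≤
      μ {ω | ∃ n : ℕ, ENNReal.ofReal (T n) < rate P x α O h g n ω} := by
  classical
  have hc : ∀ m : ℕ, 0 < P m * ‖x m‖ ^ (-α) := fun m =>
    mul_pos (hP m) (Real.rpow_pos_of_pos (norm_pos_iff.2 (hx m)) _)
  have hθ : ∀ n, 0 < thr O T n := fun n => thr_pos (hO n) (hT n)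
  rw [event_eq P x α O T h g hO hT, event_eq P x α O T h' g' hO hT]
  -- step 1 : lt ⊆ le on the μ' side
  have step1 : μ' (⋃ n, {ω | ENNReal.ofReal (thr O T n)
        * (∑' m, if m = n then 0 else ENNReal.ofReal (P m * ‖x m‖ ^ (-α) * g' m ω))
        < ENNReal.ofReal (P n * ‖x n‖ ^ (-α) * h' n ω)})
      ≤ μ' (⋃ n, {ω | ENNReal.ofReal (thr O T n)
        * (∑' m, if m = n then 0 else ENNReal.ofReal (P m * ‖x m‖ ^ (-α) * g' m ω))
        ≤ ENNReal.ofReal (P n * ‖x n‖ ^ (-α) * h' n ω)}) :=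
    measure_mono (Set.iUnion_mono fun n => Set.setOf_subset_setOf.2 fun ω hω => le_of_lt hω)
  -- step 2 : decompositions
  have hdec : μ (⋃ n, {ω | ENNReal.ofReal (thr O T n)
        * (∑' m, if m = n then 0 else ENNReal.ofReal (P m * ‖x m‖ ^ (-α) * g m ω))
        ≤ ENNReal.ofReal (P n * ‖x n‖ ^ (-α) * h n ω)})
      = ⨆ N, ⨅ k, μ (⋃ n ∈ Finset.range N,
        {ω | ENNReal.ofReal (thr O T n) * (∑ m ∈ Finset.range k, if m = n then 0
          else ENNReal.ofReal (P m * ‖x m‖ ^ (-α) * g m ω))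
          ≤ ENNReal.ofReal (P n * ‖x n‖ ^ (-α) * h n ω)}) :=
    decomp_supinf μ (fun n => ENNReal.ofReal (thr O T n))
      (fun n ω => ENNReal.ofReal (P n * ‖x n‖ ^ (-α) * h n ω))
      (fun m ω => ENNReal.ofReal (P m * ‖x m‖ ^ (-α) * g m ω))
      (fun n => ENNReal.measurable_ofReal.comp ((hhm n).const_mul _))
      (fun m => ENNReal.measurable_ofReal.comp ((hgm m).const_mul _))
  have hdec' : μ' (⋃ n, {ω | ENNReal.ofReal (thr O T n)
        * (∑' m, if m = n then 0 else ENNReal.ofReal (P m * ‖x m‖ ^ (-α) * g' m ω))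
        ≤ ENNReal.ofReal (P n * ‖x n‖ ^ (-α) * h' n ω)})
      = ⨆ N, ⨅ k, μ' (⋃ n ∈ Finset.range N,
        {ω | ENNReal.ofReal (thr O T n) * (∑ m ∈ Finset.range k, if m = n then 0
          else ENNReal.ofReal (P m * ‖x m‖ ^ (-α) * g' m ω))
          ≤ ENNReal.ofReal (P n * ‖x n‖ ^ (-α) * h' n ω)}) :=
    decomp_supinf μ' (fun n => ENNReal.ofReal (thr O T n))
      (fun n ω => ENNReal.ofReal (P n * ‖x n‖ ^ (-α) * h' n ω))
      (fun m ω => ENNReal.ofReal (P m * ‖x m‖ ^ (-α) * g' m ω))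
      (fun n => ENNReal.measurable_ofReal.comp ((hh'm n).const_mul _))
      (fun m => ENNReal.measurable_ofReal.comp ((hg'm m).const_mul _))
  -- step 3 : finite-dimensional comparison
  have step3 : ∀ N k : ℕ, μ' (⋃ n ∈ Finset.range N,
        {ω | ENNReal.ofReal (thr O T n) * (∑ m ∈ Finset.range k, if m = n then 0
          else ENNReal.ofReal (P m * ‖x m‖ ^ (-α) * g' m ω))
          ≤ ENNReal.ofReal (P n * ‖x n‖ ^ (-α) * h' n ω)})
      ≤ μ (⋃ n ∈ Finset.range N,
        {ω | ENNReal.ofReal (thr O T n) * (∑ m ∈ Finset.range k, if m = n then 0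
          else ENNReal.ofReal (P m * ‖x m‖ ^ (-α) * g m ω))
          ≤ ENNReal.ofReal (P n * ‖x n‖ ^ (-α) * h n ω)}) := by
    intro N k
    set κ : Fin N ⊕ Fin k → ℕ := Sum.elim (fun a : Fin N => Δ a) (fun m : Fin k => Ψ m)
      with hκ_def
    set κ' : Fin N ⊕ Fin k → ℕ := Sum.elim (fun a : Fin N => Δ' a) (fun m : Fin k => Ψ' m)
      with hκ'_def
    have hκpos : ∀ i, 0 < κ i := by rintro (a | m); exacts [hΔpos a, hΨpos m]
    have hκ'pos : ∀ i, 0 < κ' i := by rintro (a | m); exacts [hΔ'pos a, hΨ'pos m]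
    haveI I1 : ∀ i : Fin N ⊕ Fin k, IsProbabilityMeasure (gammaMeasure (κ i) 1) := fun i =>
      isProbabilityMeasure_gammaMeasure (by exact_mod_cast hκpos i) one_pos
    haveI I2 : ∀ i : Fin N ⊕ Fin k, IsProbabilityMeasure (gammaMeasure (κ' i) 1) := fun i =>
      isProbabilityMeasure_gammaMeasure (by exact_mod_cast hκ'pos i) one_pos
    have hpd : Measure.pi (fun i => gammaMeasure (κ' i) 1)
          (Aset (fun m => P m * ‖x m‖ ^ (-α)) (fun n => ENNReal.ofReal (thr O T n)) N k)
        ≤ Measure.pi (fun i => gammaMeasure (κ i) 1)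
          (Aset (fun m => P m * ‖x m‖ ^ (-α)) (fun n => ENNReal.ofReal (thr O T n)) N k) := by
      refine pi_dom (fun i => gammaMeasure (κ i) 1) (fun i => gammaMeasure (κ' i) 1)
        (Sum.elim (fun _ => true) (fun _ => false)) ?_ ?_ _
        (Aset_measurable _ _ N k) ?_ ?_
      · rintro (a | m) hdir U hU
        · exact gamma_upperSet_mono (hΔ'pos a) (hΔ a) hU
        · simp at hdir
      · rintro (a | m) hdir U hU
        · simp at hdir
        · exact gamma_upperSet_mono (hΨpos m) (hΨ m) hU
      · rintro (a | m) hdir y t t' htt' hy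
        · exact Aset_up _ hc _ N k a y t t' htt' hy
        · simp at hdir
      · rintro (a | m) hdir y t t' htt' hy
        · simp at hdir
        · exact Aset_down _ hc _ N k m y t t' htt' hy
    refine le_of_eq_of_le ?_ (le_of_le_of_eq hpd ?_)
    · exact F_eq_pi μ' h' g' hh'm hg'm hindep' Δ' Ψ' hh'd hg'd
        (fun m => P m * ‖x m‖ ^ (-α)) (fun n => ENNReal.ofReal (thr O T n)) N k
    · exact (F_eq_pi μ h g hhm hgm hindep Δ Ψ hhd hgd
        (fun m => P m * ‖x m‖ ^ (-α)) (fun n => ENNReal.ofReal (thr O T n)) N k).symm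
  -- step 4 : le back to lt on the μ side
  have step4 : μ (⋃ n, {ω | ENNReal.ofReal (thr O T n)
        * (∑' m, if m = n then 0 else ENNReal.ofReal (P m * ‖x m‖ ^ (-α) * g m ω))
        ≤ ENNReal.ofReal (P n * ‖x n‖ ^ (-α) * h n ω)})
      ≤ μ (⋃ n, {ω | ENNReal.ofReal (thr O T n)
        * (∑' m, if m = n then 0 else ENNReal.ofReal (P m * ‖x m‖ ^ (-α) * g m ω))
        < ENNReal.ofReal (P n * ‖x n‖ ^ (-α) * h n ω)}) := by
    have hnull : μ (⋃ n, {ω | ENNReal.ofReal (thr O T n)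
        * (∑' m, if m = n then 0 else ENNReal.ofReal (P m * ‖x m‖ ^ (-α) * g m ω))
        = ENNReal.ofReal (P n * ‖x n‖ ^ (-α) * h n ω)}) = 0 :=
      measure_iUnion_null fun n =>
        null_eq_event2 μ P x α h g hhm hgm hindep Δ hhd n (hθ n) (hc n)
    have hsub : (⋃ n, {ω | ENNReal.ofReal (thr O T n)
        * (∑' m, if m = n then 0 else ENNReal.ofReal (P m * ‖x m‖ ^ (-α) * g m ω))
        ≤ ENNReal.ofReal (P n * ‖x n‖ ^ (-α) * h n ω)})
        ⊆ (⋃ n, {ω | ENNReal.ofReal (thr O T n)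
        * (∑' m, if m = n then 0 else ENNReal.ofReal (P m * ‖x m‖ ^ (-α) * g m ω))
        < ENNReal.ofReal (P n * ‖x n‖ ^ (-α) * h n ω)})
        ∪ (⋃ n, {ω | ENNReal.ofReal (thr O T n)
        * (∑' m, if m = n then 0 else ENNReal.ofReal (P m * ‖x m‖ ^ (-α) * g m ω))
        = ENNReal.ofReal (P n * ‖x n‖ ^ (-α) * h n ω)}) := by
      intro ω hω
      obtain ⟨n, hn⟩ := Set.mem_iUnion.1 hω
      simp only [Set.mem_setOf_eq] at hn
      rcases lt_or_eq_of_le hn with hlt | heq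
      · exact Or.inl (Set.mem_iUnion.2 ⟨n, hlt⟩)
      · exact Or.inr (Set.mem_iUnion.2 ⟨n, heq⟩)
    refine le_trans (measure_mono hsub) (le_trans (measure_union_le _ _) ?_)
    rw [hnull, add_zero]
  exact le_trans step1 (le_trans (le_of_eq hdec')
    (le_trans (iSup_mono fun N => iInf_mono fun k => step3 N k)
      (le_trans (le_of_eq hdec.symm) step4)))
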